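/- Let ξ and η be positive irrational real numbers and m a positive natural number with ξ·η = m. Suppose both (n−1, k−1) and (n, k) are connected, where n ≥ 2 and k ≥ 2, and set r = p_{n−1}/Q_{k−1}, s = P_{k−1}/q_{n−1}. Then the complete quotients satisfy the exact relation r·ξ_n − s·η_k = 0. -/

import Mathlib

/-- Complete quotients: `cq ξ 0 = ξ`, `cq ξ (n+1) = 1/(cq ξ n - ⌊cq ξ n⌋)`. -/
noncomputable def cq (ξ : ℝ) : ℕ → ℝ
  | 0 => ξ
  | n + 1 => 1 / (cq ξ n - ⌊cq ξ n⌋)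

/-- Partial quotients: `pquot ξ n = b_n = ⌊ξ_n⌋`. -/
noncomputable def pquot (ξ : ℝ) (n : ℕ) : ℤ := ⌊cq ξ n⌋

/-- Convergent numerators, shifted by one: `cnum ξ 0 = p_{-1} = 1`,
`cnum ξ 1 = p_0 = b_0`, and `cnum ξ (n+1) = p_n = b_n p_{n-1} + p_{n-2}`. -/
noncomputable def cnum (ξ : ℝ) : ℕ → ℤ
  | 0 => 1
  | 1 => pquot ξ 0
  | n + 2 => pquot ξ (n + 1) * cnum ξ (n + 1) + cnum ξ n

/-- Convergent denominators, shifted by one: `cden ξ 0 = q_{-1} = 0`,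
`cden ξ 1 = q_0 = 1`, and `cden ξ (n+1) = q_n = b_n q_{n-1} + q_{n-2}`. -/
noncomputable def cden (ξ : ℝ) : ℕ → ℤ
  | 0 => 0
  | 1 => 1
  | n + 2 => pquot ξ (n + 1) * cden ξ (n + 1) + cden ξ n

lemma cq_irrational {ξ : ℝ} (h : Irrational ξ) : ∀ n, Irrational (cq ξ n)
  | 0 => h
  | n + 1 => by
    have ih := cq_irrational h n
    have : Irrational (cq ξ n - (⌊cq ξ n⌋ : ℤ)) := ih.sub_intCast _
    simpa [cq, one_div] using this.inv

lemma one_lt_cq {ξ : ℝ} (h : Irrational ξ) (n : ℕ) : 1 < cq ξ (n + 1) := by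
  have ih := cq_irrational h n
  have hfr : cq ξ n - ⌊cq ξ n⌋ = Int.fract (cq ξ n) := rfl
  have h0 : 0 < Int.fract (cq ξ n) := by
    rcases lt_or_eq_of_le (Int.fract_nonneg (cq ξ n)) with h' | h'
    · exact h'
    · exfalso
      have : Irrational (Int.fract (cq ξ n)) := ih.sub_intCast _
      exact this.ne_int 0 (by simp [← h'])
  have h1 : Int.fract (cq ξ n) < 1 := Int.fract_lt_one _
  have : (1 : ℝ) < 1 / Int.fract (cq ξ n) := one_lt_one_div h0 h1
  simpa [cq, hfr] using this

lemma one_le_pquot {ξ : ℝ} (h : Irrational ξ) (n : ℕ) : 1 ≤ pquot ξ (n + 1) := by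
  have := one_lt_cq h n
  have : (1 : ℤ) ≤ ⌊cq ξ (n + 1)⌋ := by
    rw [Int.le_floor]; push_cast; linarith
  exact this

lemma pquot_zero_nonneg {ξ : ℝ} (h : 0 < ξ) : 0 ≤ pquot ξ 0 := by
  have : (0 : ℤ) ≤ ⌊cq ξ 0⌋ := by
    rw [Int.le_floor]; simpa [cq] using h.le
  exact this

lemma cnum_nonneg {ξ : ℝ} (hpos : 0 < ξ) (hirr : Irrational ξ) : ∀ n, 0 ≤ cnum ξ n
  | 0 => by simp [cnum]
  | 1 => pquot_zero_nonneg hpos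
  | n + 2 => by
    have h1 := cnum_nonneg hpos hirr (n + 1)
    have h2 := cnum_nonneg hpos hirr n
    have h3 := one_le_pquot hirr n
    simp only [cnum]; nlinarith

lemma cnum_pos {ξ : ℝ} (hpos : 0 < ξ) (hirr : Irrational ξ) : ∀ n, 1 ≤ cnum ξ (n + 2)
  | 0 => by
    have h3 := one_le_pquot hirr 0
    have h1 := pquot_zero_nonneg hpos
    simp only [cnum]; nlinarith
  | n + 1 => by
    have h1 := cnum_pos hpos hirr n
    have h2 := cnum_nonneg hpos hirr (n + 1)
    have h3 := one_le_pquot hirr (n + 1)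
    simp only [cnum] at h1 ⊢; nlinarith

lemma cden_nonneg {ξ : ℝ} (hirr : Irrational ξ) : ∀ n, 0 ≤ cden ξ n
  | 0 => le_refl _
  | 1 => zero_le_one
  | n + 2 => by
    have h1 := cden_nonneg hirr (n + 1)
    have h2 := cden_nonneg hirr n
    have h3 := one_le_pquot hirr n
    simp only [cden]; nlinarith

lemma cden_pos {ξ : ℝ} (hirr : Irrational ξ) : ∀ n, 1 ≤ cden ξ (n + 1)
  | 0 => le_refl _
  | n + 1 => by
    have h1 := cden_pos hirr n
    have h2 := cden_nonneg hirr n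
    have h3 := one_le_pquot hirr n
    simp only [cden]; nlinarith

lemma det_eq {ξ : ℝ} : ∀ n, cnum ξ (n + 1) * cden ξ n - cnum ξ n * cden ξ (n + 1) = (-1) ^ (n + 1)
  | 0 => by simp [cnum, cden]
  | n + 1 => by
    have ih := det_eq (ξ := ξ) n
    simp only [cnum, cden, pow_succ]
    ring_nf
    ring_nf at ih
    linarith

lemma coprime_cnum_cden {ξ : ℝ} (n : ℕ) : IsCoprime (cnum ξ (n + 1)) (cden ξ (n + 1)) := by
  refine ⟨(-1) ^ (n + 1) * cden ξ n, -((-1) ^ (n + 1) * cnum ξ n), ?_⟩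
  have h := det_eq (ξ := ξ) n
  have hsq : ((-1 : ℤ) ^ (n + 1)) * ((-1) ^ (n + 1)) = 1 := by
    rw [← pow_add]; exact (neg_one_pow_eq_one_iff_even (by norm_num)).2 ⟨n + 1, by ring⟩
  linear_combination (-1 : ℤ) ^ (n + 1) * h + hsq

lemma cq_mul {ξ : ℝ} (hirr : Irrational ξ) (n : ℕ) :
    cq ξ n * cq ξ (n + 1) = (pquot ξ n : ℝ) * cq ξ (n + 1) + 1 := by
  have h0 : Irrational (cq ξ n) := cq_irrational hirr n
  have hne : cq ξ n - (⌊cq ξ n⌋ : ℝ) ≠ 0 := by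
    intro h
    exact (h0.sub_intCast ⌊cq ξ n⌋).ne_int 0 (by push_cast; linarith [sub_eq_zero.mp h])
  have h : cq ξ (n + 1) = 1 / (cq ξ n - ⌊cq ξ n⌋) := rfl
  rw [pquot, h]
  rw [mul_one_div, mul_one_div, div_add' _ _ _ hne, div_eq_div_iff hne hne]
  ring

lemma key_rec {ξ : ℝ} (hirr : Irrational ξ) : ∀ n,
    ξ * (cden ξ (n + 1) * cq ξ (n + 1) + cden ξ n) =
      cnum ξ (n + 1) * cq ξ (n + 1) + cnum ξ n
  | 0 => by
    have h := cq_mul hirr 0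
    have h0 : cq ξ 0 = ξ := rfl
    rw [h0] at h
    simp only [cden, cnum]
    push_cast
    linear_combination h
  | n + 1 => by
    have ih := key_rec hirr n
    have h := cq_mul hirr (n + 1)
    simp only [cnum, cden]
    push_cast
    linear_combination cq ξ (n + 2) * ih +
      ((cnum ξ (n + 1) : ℝ) - ξ * cden ξ (n + 1)) * h

/-- For two consecutive connections `(n-1, k-1)` and `(n, k)`, the complete
quotients satisfy `r·ξ_n - s·η_k = 0`. -/
theorem consecutive_connections_complete_quotients
    (ξ η : ℝ) (m : ℕ) (hξpos : 0 < ξ) (hηpos : 0 < η)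
    (hξirr : Irrational ξ) (hηirr : Irrational η) (hm : 0 < m)
    (hmul : ξ * η = m) (n k : ℕ) (hn : 2 ≤ n) (hk : 2 ≤ k)
    (hconnPrev : cnum ξ (n - 1) * cnum η (k - 1) =
      (m : ℤ) * cden ξ (n - 1) * cden η (k - 1))
    (hconn : cnum ξ n * cnum η k = (m : ℤ) * cden ξ n * cden η k) :
    ((cnum ξ n / cden η k : ℤ) : ℝ) * cq ξ n -
      ((cnum η k / cden ξ n : ℤ) : ℝ) * cq η k = 0 := by
  obtain ⟨j, rfl⟩ : ∃ j, n = j + 2 := ⟨n - 2, by omega⟩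
  obtain ⟨l, rfl⟩ : ∃ l, k = l + 2 := ⟨k - 2, by omega⟩
  have hprev : cnum ξ (j + 1) * cnum η (l + 1) =
      (m : ℤ) * cden ξ (j + 1) * cden η (l + 1) := hconnPrev
  set p := cnum ξ (j + 2) with hp_def
  set q := cden ξ (j + 2) with hq_def
  set p' := cnum ξ (j + 1) with hp'_def
  set q' := cden ξ (j + 1) with hq'_def
  set P := cnum η (l + 2) with hP_def
  set Q := cden η (l + 2) with hQ_def
  set P' := cnum η (l + 1) with hP'_def
  set Q' := cden η (l + 1) with hQ'_def
  have hppos : 1 ≤ p := cnum_pos hξpos hξirr j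
  have hqpos : 1 ≤ q := cden_pos hξirr (j + 1)
  have hPpos : 1 ≤ P := cnum_pos hηpos hηirr l
  have hQpos : 1 ≤ Q := cden_pos hηirr (l + 1)
  -- divisibility
  have copξ : IsCoprime p q := coprime_cnum_cden (j + 1)
  have copη : IsCoprime P Q := coprime_cnum_cden (l + 1)
  have hQdvd : Q ∣ p := by
    refine copη.symm.dvd_of_dvd_mul_right ?_
    exact ⟨(m : ℤ) * q, by linarith [hconn]⟩
  have hqdvd : q ∣ P := by
    refine copξ.symm.dvd_of_dvd_mul_left ?_
    exact ⟨(m : ℤ) * Q, by linarith [hconn]⟩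
  obtain ⟨r, hr⟩ := hQdvd
  obtain ⟨s, hs⟩ := hqdvd
  have hrpos : 1 ≤ r := by nlinarith
  have hspos : 1 ≤ s := by nlinarith
  have hmrs : (m : ℤ) = r * s := by
    have h1 : (r * s) * (q * Q) = (m : ℤ) * (q * Q) := by linear_combination hconn - P * hr - r * Q * hs
    have h2 : (q * Q : ℤ) ≠ 0 := by positivity
    exact (mul_right_cancel₀ h2 h1).symm
  have dξ : p * q' - p' * q = (-1) ^ (j + 2) := det_eq (j + 1)
  have dη : P * Q' - P' * Q = (-1) ^ (l + 2) := det_eq (l + 1)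
  have hA : (m : ℤ) * q * Q' - p * P' = r * (-1) ^ (l + 2) := by
    linear_combination (q * Q') * hmrs - P' * hr - r * Q' * hs + r * dη
  have hB : (m : ℤ) * q' * Q - p' * P = s * (-1) ^ (j + 2) := by
    linear_combination (q' * Q) * hmrs - p' * hs - s * q' * hr + s * dξ
  -- real versions
  set A := cq ξ (j + 2) with hA_def
  set B := cq η (l + 2) with hB_def
  have hA1 : (1 : ℝ) < A := one_lt_cq hξirr (j + 1)
  have hB1 : (1 : ℝ) < B := one_lt_cq hηirr (l + 1)
  have Hξ : ξ * ((q : ℝ) * A + q') = (p : ℝ) * A + p' := key_rec hξirr (j + 1)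
  have Hη : η * ((Q : ℝ) * B + Q') = (P : ℝ) * B + P' := key_rec hηirr (l + 1)
  have hconnR : (p : ℝ) * P = (m : ℝ) * q * Q := by exact_mod_cast hconn
  have hprevR : (p' : ℝ) * P' = (m : ℝ) * q' * Q' := by exact_mod_cast hprev
  have hAR : (m : ℝ) * q * Q' - p * P' = (r : ℝ) * (-1) ^ (l + 2) := by exact_mod_cast hA
  have hBR : (m : ℝ) * q' * Q - p' * P = (s : ℝ) * (-1) ^ (j + 2) := by exact_mod_cast hB
  have E : (ξ * ((q : ℝ) * A + q')) * (η * ((Q : ℝ) * B + Q')) =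
      ((p : ℝ) * A + p') * ((P : ℝ) * B + P') := by rw [Hξ, Hη]
  have Hmaster : (r : ℝ) * (-1) ^ (l + 2) * A + (s : ℝ) * (-1) ^ (j + 2) * B = 0 := by
    linear_combination E - (((q : ℝ) * A + q') * ((Q : ℝ) * B + Q')) * hmul +
      A * B * hconnR + hprevR - A * hAR - B * hBR
  clear_value p q p' q' P Q P' Q' A B
  have e1 : p / Q = r := by rw [hr]; exact Int.mul_ediv_cancel_left r (by omega)
  have e2 : P / q = s := by rw [hs]; exact Int.mul_ediv_cancel_left s (by omega)
  rw [e1, e2]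
  have hrR : (1 : ℝ) ≤ (r : ℝ) := by exact_mod_cast hrpos
  have hsR : (1 : ℝ) ≤ (s : ℝ) := by exact_mod_cast hspos
  have hl2 : ((-1 : ℝ)) ^ (l + 2) = (-1) ^ l := by rw [pow_add]; norm_num
  have hj2 : ((-1 : ℝ)) ^ (j + 2) = (-1) ^ j := by rw [pow_add]; norm_num
  rw [hl2, hj2] at Hmaster
  have hrA : (0 : ℝ) < (r : ℝ) * A := mul_pos (by linarith) (by linarith)
  have hsB : (0 : ℝ) < (s : ℝ) * B := mul_pos (by linarith) (by linarith)
  clear E Hξ Hη hconnR hprevR hAR hBR hA hB dξ dη hmrs hr hs copξ copη hconn hprev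
  rcases Nat.even_or_odd j with hj | hj <;> rcases Nat.even_or_odd l with hl | hl
  · rw [hj.neg_one_pow, hl.neg_one_pow] at Hmaster; linarith
  · rw [hj.neg_one_pow, hl.neg_one_pow] at Hmaster; linarith
  · rw [hj.neg_one_pow, hl.neg_one_pow] at Hmaster; linarith
  · rw [hj.neg_one_pow, hl.neg_one_pow] at Hmaster; linarith
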